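/- Let n ≥ 1, N ≥ 1, and let M = (M_{ij}) be a real N×N matrix all of whose entries are nonnegative. If f belongs to the cone 𝓔_G, then the function (x_1,…,x_N) ↦ f(y_1,…,y_N), where y_i = Σ_{j=1}^N M_{ij} x_j ∈ ℝ^n, again belongs to 𝓔_G. (In particular, precomposition with e^{−tF} for ferromagnetic F preserves the cone 𝓔_G.) -/
import Mathlib


open MeasureTheory RealInnerProductSpace Real

/-- The cone `𝓔_G` of finite linear combinations with nonnegative coefficients of
monomials `∏_{1 ≤ i ≤ j ≤ N} (x_i · x_j)^{n_{ij}}`, for variables `x_1,…,x_N ∈ ℝ^n`. -/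
def InConeG (n N : ℕ) (f : (Fin N → EuclideanSpace ℝ (Fin n)) → ℝ) : Prop :=
  ∃ (K : ℕ) (c : Fin K → ℝ) (e : Fin K → Fin N → Fin N → ℕ),
    (∀ k, 0 ≤ c k) ∧
    ∀ x, f x = ∑ k, c k *
      ∏ p ∈ Finset.univ.filter (fun p : Fin N × Fin N => p.1 ≤ p.2),
        (⟪x p.1, x p.2⟫ : ℝ) ^ e k p.1 p.2

namespace ConeGAux

variable {n N : ℕ}

/-- Monomial function. -/
noncomputable def mon (e : Fin N → Fin N → ℕ) (x : Fin N → EuclideanSpace ℝ (Fin n)) : ℝ :=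
  ∏ p ∈ Finset.univ.filter (fun p : Fin N × Fin N => p.1 ≤ p.2),
    (⟪x p.1, x p.2⟫ : ℝ) ^ e p.1 p.2

/-- Restatement of the cone with monomials abbreviated. -/
def InConeG' (f : (Fin N → EuclideanSpace ℝ (Fin n)) → ℝ) : Prop :=
  ∃ (K : ℕ) (c : Fin K → ℝ) (e : Fin K → Fin N → Fin N → ℕ),
    (∀ k, 0 ≤ c k) ∧ ∀ x, f x = ∑ k, c k * mon (e k) x

lemma inConeG_iff (f : (Fin N → EuclideanSpace ℝ (Fin n)) → ℝ) :
    InConeG n N f ↔ InConeG' f := Iff.rfl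

lemma inConeG'_of_fintype {ι : Type} [Fintype ι] (f : (Fin N → EuclideanSpace ℝ (Fin n)) → ℝ)
    (c : ι → ℝ) (e : ι → Fin N → Fin N → ℕ) (hc : ∀ k, 0 ≤ c k)
    (hfx : ∀ x, f x = ∑ k, c k * mon (e k) x) : InConeG' f := by
  classical
  let g := Fintype.equivFin ι
  refine ⟨Fintype.card ι, c ∘ g.symm, e ∘ g.symm, fun k => hc _, fun x => ?_⟩
  rw [hfx x]
  refine Fintype.sum_equiv g _ _ (fun i => ?_)
  rw [Function.comp_apply, Function.comp_apply, Equiv.symm_apply_apply]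

lemma cone_congr {f g : (Fin N → EuclideanSpace ℝ (Fin n)) → ℝ} (h : ∀ x, f x = g x)
    (hf : InConeG' f) : InConeG' g := by
  obtain ⟨K, c, e, hc, hfx⟩ := hf
  exact ⟨K, c, e, hc, fun x => (h x) ▸ hfx x⟩

lemma cone_zero : InConeG' (n := n) (N := N) (fun _ => 0) := by
  refine inConeG'_of_fintype (ι := Empty) _ Empty.elim Empty.elim (fun k => k.elim) ?_
  intro x; simp

lemma cone_one : InConeG' (n := n) (N := N) (fun _ => 1) := by
  refine inConeG'_of_fintype (ι := Unit) _ (fun _ => 1) (fun _ _ _ => 0) (fun _ => zero_le_one) ?_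
  intro x; simp [mon]

lemma cone_add {f g : (Fin N → EuclideanSpace ℝ (Fin n)) → ℝ}
    (hf : InConeG' f) (hg : InConeG' g) : InConeG' (fun x => f x + g x) := by
  obtain ⟨K1, c1, e1, hc1, h1⟩ := hf
  obtain ⟨K2, c2, e2, hc2, h2⟩ := hg
  refine inConeG'_of_fintype (ι := Fin K1 ⊕ Fin K2) _ (Sum.elim c1 c2) (Sum.elim e1 e2)
    (fun k => by cases k <;> simp [hc1, hc2]) ?_
  intro x
  rw [Fintype.sum_sum_type]
  simp only [Sum.elim_inl, Sum.elim_inr]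
  rw [← h1 x, ← h2 x]

lemma cone_smul {f : (Fin N → EuclideanSpace ℝ (Fin n)) → ℝ} (a : ℝ) (ha : 0 ≤ a)
    (hf : InConeG' f) : InConeG' (fun x => a * f x) := by
  obtain ⟨K, c, e, hc, h⟩ := hf
  refine ⟨K, fun k => a * c k, e, fun k => mul_nonneg ha (hc k), fun x => ?_⟩
  show a * f x = _
  rw [h x, Finset.mul_sum]
  exact Finset.sum_congr rfl (fun k _ => by ring)

lemma mon_add (e1 e2 : Fin N → Fin N → ℕ) (x : Fin N → EuclideanSpace ℝ (Fin n)) :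
    mon (fun i j => e1 i j + e2 i j) x = mon e1 x * mon e2 x := by
  unfold mon
  rw [← Finset.prod_mul_distrib]
  exact Finset.prod_congr rfl (fun p _ => pow_add _ _ _)

lemma cone_mul {f g : (Fin N → EuclideanSpace ℝ (Fin n)) → ℝ}
    (hf : InConeG' f) (hg : InConeG' g) : InConeG' (fun x => f x * g x) := by
  obtain ⟨K1, c1, e1, hc1, h1⟩ := hf
  obtain ⟨K2, c2, e2, hc2, h2⟩ := hg
  refine inConeG'_of_fintype (ι := Fin K1 × Fin K2) _ (fun k => c1 k.1 * c2 k.2)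
    (fun k i j => e1 k.1 i j + e2 k.2 i j)
    (fun k => mul_nonneg (hc1 k.1) (hc2 k.2)) ?_
  intro x
  rw [h1 x, h2 x, Finset.sum_mul_sum, Fintype.sum_prod_type]
  refine Finset.sum_congr rfl (fun k _ => Finset.sum_congr rfl (fun l _ => ?_))
  rw [mon_add]
  ring

lemma cone_sum {α : Type*} (s : Finset α) (F : α → (Fin N → EuclideanSpace ℝ (Fin n)) → ℝ)
    (h : ∀ a ∈ s, InConeG' (F a)) : InConeG' (fun x => ∑ a ∈ s, F a x) := by
  classical
  have key : InConeG' (∑ a ∈ s, F a) := by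
    refine Finset.sum_induction F (fun g => InConeG' g) ?_ ?_ h
    · intro a b ha hb
      exact cone_congr (fun x => rfl) (cone_add ha hb)
    · exact cone_congr (fun x => rfl) cone_zero
  exact cone_congr (fun x => by simp) key

lemma cone_prod {α : Type*} (s : Finset α) (F : α → (Fin N → EuclideanSpace ℝ (Fin n)) → ℝ)
    (h : ∀ a ∈ s, InConeG' (F a)) : InConeG' (fun x => ∏ a ∈ s, F a x) := by
  classical
  have key : InConeG' (∏ a ∈ s, F a) := by
    refine Finset.prod_induction F (fun g => InConeG' g) ?_ ?_ h
    · intro a b ha hb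
      exact cone_congr (fun x => rfl) (cone_mul ha hb)
    · exact cone_congr (fun x => rfl) cone_one
  exact cone_congr (fun x => by simp) key

lemma cone_pow {f : (Fin N → EuclideanSpace ℝ (Fin n)) → ℝ} (hf : InConeG' f) (m : ℕ) :
    InConeG' (fun x => f x ^ m) := by
  induction m with
  | zero => simpa using cone_one
  | succ m ih =>
    refine cone_congr (fun x => ?_) (cone_mul ih hf)
    rw [pow_succ]

lemma cone_inner_le {i j : Fin N} (hij : i ≤ j) :
    InConeG' (fun x : Fin N → EuclideanSpace ℝ (Fin n) => (⟪x i, x j⟫ : ℝ)) := by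
  classical
  refine inConeG'_of_fintype (ι := Unit) _ (fun _ => 1)
    (fun _ a b => if a = i ∧ b = j then 1 else 0) (fun _ => zero_le_one) ?_
  intro x
  simp only [Finset.univ_unique, Finset.sum_singleton, one_mul, mon]
  rw [Finset.prod_eq_single (i, j)]
  · simp
  · intro p hp hne
    rw [if_neg, pow_zero]
    rintro ⟨h1, h2⟩
    exact hne (Prod.ext h1 h2)
  · intro h
    exact absurd hij (by simpa using h)

lemma cone_inner (i j : Fin N) :
    InConeG' (fun x : Fin N → EuclideanSpace ℝ (Fin n) => (⟪x i, x j⟫ : ℝ)) := by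
  rcases le_total i j with h | h
  · exact cone_inner_le h
  · exact cone_congr (fun x => real_inner_comm _ _) (cone_inner_le h)

lemma cone_inner_sum (M : Matrix (Fin N) (Fin N) ℝ) (hM : ∀ i j, 0 ≤ M i j) (i j : Fin N) :
    InConeG' (fun x : Fin N → EuclideanSpace ℝ (Fin n) =>
      (⟪∑ a, M i a • x a, ∑ b, M j b • x b⟫ : ℝ)) := by
  have key : ∀ x : Fin N → EuclideanSpace ℝ (Fin n),
      (⟪∑ a, M i a • x a, ∑ b, M j b • x b⟫ : ℝ)
        = ∑ a, ∑ b, (M i a * M j b) * (⟪x a, x b⟫ : ℝ) := by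
    intro x
    rw [sum_inner]
    refine Finset.sum_congr rfl (fun a _ => ?_)
    rw [inner_sum]
    refine Finset.sum_congr rfl (fun b _ => ?_)
    rw [real_inner_smul_left, real_inner_smul_right]
    ring
  refine cone_congr (fun x => (key x).symm) ?_
  refine cone_sum _ _ (fun a _ => cone_sum _ _ (fun b _ => ?_))
  exact cone_smul _ (mul_nonneg (hM i a) (hM j b)) (cone_inner a b)

end ConeGAux

/-- If all entries of the matrix `M` are nonnegative and `f ∈ 𝓔_G`, then
`(x₁,…,x_N) ↦ f(y₁,…,y_N)` with `y_i = ∑_j M_{ij} x_j` again belongs to `𝓔_G`. -/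
theorem nonneg_matrix_precomposition_preserves_coneG (n N : ℕ) (hn : 1 ≤ n) (hN : 1 ≤ N)
    (M : Matrix (Fin N) (Fin N) ℝ) (hM : ∀ i j, 0 ≤ M i j)
    (f : (Fin N → EuclideanSpace ℝ (Fin n)) → ℝ) (hf : InConeG n N f) :
    InConeG n N (fun x => f (fun i => ∑ j, M i j • x j)) := by
  classical
  rw [ConeGAux.inConeG_iff] at hf ⊢
  obtain ⟨K, c, e, hc, hfx⟩ := hf
  refine ConeGAux.cone_congr (fun x => (hfx (fun i => ∑ j, M i j • x j)).symm) ?_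
  refine ConeGAux.cone_sum Finset.univ _ (fun k _ => ?_)
  refine ConeGAux.cone_smul _ (hc k) ?_
  refine ConeGAux.cone_prod _ _ (fun p _ => ?_)
  exact ConeGAux.cone_pow (ConeGAux.cone_inner_sum M hM p.1 p.2) _
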